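/- arXiv:2101.03146 — 6 statements merged into one kernel-verified Lean document; each statement's English description precedes it below -/
import Mathlib

section
/- Let S be a perfect F_p-algebra (the Frobenius x ↦ x^p is bijective) and I a finitely generated ideal of S. Then the tilt (S/I)^♭ := lim_{x↦x^p} S/I is naturally isomorphic as a ring to the I-adic completion of S. -/
open Submodule

section TiltAux

variable (p : ℕ) [Fact p.Prime] (S : Type*) [CommRing S] [CharP S p] [PerfectRing S p]

/-- The inverse of the `n`-fold Frobenius. -/
noncomputable def frobInv : ℕ → (S ≃+* S)
  | 0 => RingEquiv.refl S
  | n + 1 => ((frobeniusEquiv S p).symm : S ≃+* S).trans (frobInv n)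

variable {S}

lemma frobInv_succ_apply (n : ℕ) (x : S) :
    frobInv p S (n + 1) x = frobInv p S n ((frobeniusEquiv S p).symm x) := rfl

lemma frobInv_pow (n : ℕ) (x : S) : frobInv p S n (x ^ p ^ n) = x := by
  induction n generalizing x with
  | zero => simp [frobInv]
  | succ n ih =>
    have h1 : x ^ p ^ (n + 1) = (x ^ p ^ n) ^ p := by
      rw [← pow_mul, pow_succ]
    rw [frobInv_succ_apply, h1,
      show (frobeniusEquiv S p).symm ((x ^ p ^ n) ^ p) = x ^ p ^ n from by
        rw [← frobenius_def]; exact frobeniusEquiv_symm_apply_frobenius S p _, ih]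

lemma pow_frobInv (n : ℕ) (x : S) : (frobInv p S n x) ^ p ^ n = x := by
  apply (frobInv p S n).injective
  exact frobInv_pow p n (frobInv p S n x)

lemma frobInv_succ_pow_p (n : ℕ) (x : S) :
    (frobInv p S (n + 1) x) ^ p = frobInv p S n x := by
  rw [frobInv_succ_apply, ← map_pow, frobeniusEquiv_symm_pow_p]

lemma frobInv_exists_pow (I : Ideal S) (hI : I.FG) (n : ℕ) :
    ∃ k : ℕ, ∀ x ∈ I ^ k, frobInv p S n x ∈ I := by
  have hrad : Ideal.map (frobInv p S n : S →+* S) I ≤ I.radical := by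
    rw [Ideal.map_le_iff_le_comap]
    intro x hx
    rw [Ideal.mem_comap]
    refine ⟨p ^ n, ?_⟩
    show (frobInv p S n x) ^ p ^ n ∈ I
    rw [pow_frobInv]
    exact hx
  obtain ⟨k, hk⟩ := Ideal.exists_pow_le_of_le_radical_of_fg hrad (hI.map _)
  refine ⟨k, fun x hx => ?_⟩
  apply hk
  rw [← Ideal.map_pow]
  exact Ideal.mem_map_of_mem _ hx

end TiltAux

set_option maxHeartbeats 1000000 in
/-- Let `S` be a perfect `𝔽_p`-algebra and `I` a finitely generated
ideal of `S`.  Then the tilt `(S/I)^♭ = lim_{x ↦ x^p} S/I` (Mathlib's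
`Ring.Perfection (S ⧸ I) p`) is isomorphic as a ring to the `I`-adic completion of `S`. -/
theorem tilt_iso_adicCompletion (p : ℕ) [Fact p.Prime]
    (S : Type*) [CommRing S] [CharP S p] [PerfectRing S p]
    (I : Ideal S) (hI : I.FG) [CharP (S ⧸ I) p] :
    Nonempty (Perfection (S ⧸ I) p ≃+* AdicCompletion I S) := by
  classical
  -- notation
  set π : S →+* S ⧸ I := Ideal.Quotient.mk I with hπ
  set L : (S ⧸ I) → S := Function.surjInv Ideal.Quotient.mk_surjective with hLdef
  have hL : ∀ y : S ⧸ I, π (L y) = y := fun y => Function.surjInv_eq _ y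
  have hsmul : ∀ m : ℕ, (I ^ m • ⊤ : Ideal S) = I ^ m := fun m => by
    rw [smul_eq_mul, Ideal.mul_top]
  have hple : ∀ m : ℕ, m ≤ p ^ m := fun m =>
    (Nat.lt_pow_self (n := m) (Fact.out : p.Prime).one_lt).le
  -- the key quotient congruence
  have hQ : ∀ (m : ℕ) {a b : S}, π a = π b →
      Ideal.Quotient.mk (I ^ m • ⊤ : Ideal S) (a ^ p ^ m) =
        Ideal.Quotient.mk (I ^ m • ⊤ : Ideal S) (b ^ p ^ m) := by
    intro m a b hab
    rw [Ideal.Quotient.eq] at hab ⊢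
    rw [hsmul m, ← sub_pow_char_pow]
    exact Ideal.pow_le_pow_right (hple m) (Ideal.pow_mem_pow hab _)
  -- coefficients of the perfection
  have hcoeff : ∀ (x : Perfection (S ⧸ I) p) (m j : ℕ),
      Perfection.coeff (S ⧸ I) p m x = Perfection.coeff (S ⧸ I) p (m + j) x ^ p ^ j := by
    intro x m j
    induction j with
    | zero => simp
    | succ j ih =>
      rw [ih, ← Perfection.coeff_pow_p' x (m + j), ← pow_mul, ← pow_succ',
        show m + j + 1 = m + (j + 1) from by omega]
  -- the map
  choose k hk using fun n => frobInv_exists_pow p I hI n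
  set Φf : Perfection (S ⧸ I) p → AdicCompletion I S := fun x =>
    (⟨fun m => Ideal.Quotient.mk (I ^ m • ⊤ : Ideal S)
        ((L (Perfection.coeff (S ⧸ I) p m x)) ^ p ^ m), by
      intro m n hmn
      rw [AdicCompletion.transitionMap_ideal_mk]
      rw [show (L (Perfection.coeff (S ⧸ I) p n x)) ^ p ^ n
          = ((L (Perfection.coeff (S ⧸ I) p n x)) ^ p ^ (n - m)) ^ p ^ m from by
        rw [← pow_mul, ← pow_add, Nat.sub_add_cancel hmn]]
      apply hQ
      rw [map_pow, hL, hL, hcoeff x m (n - m), Nat.add_sub_cancel' hmn]⟩ :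
      AdicCompletion I S) with hΦf
  have hval : ∀ (x : Perfection (S ⧸ I) p) (m : ℕ),
      (Φf x).val m = Ideal.Quotient.mk (I ^ m • ⊤ : Ideal S)
        ((L (Perfection.coeff (S ⧸ I) p m x)) ^ p ^ m) := fun _ _ => rfl
  set Φ : Perfection (S ⧸ I) p →+* AdicCompletion I S :=
    { toFun := Φf
      map_one' := by
        apply AdicCompletion.ext
        intro m
        rw [hval, AdicCompletion.val_one,
          show (1 : S ⧸ (I ^ m • ⊤ : Ideal S)) =
            Ideal.Quotient.mk (I ^ m • ⊤ : Ideal S) (1 ^ p ^ m) from by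
              rw [one_pow, map_one]]
        apply hQ
        rw [hL, map_one, map_one]
      map_mul' := by
        intro x y
        apply AdicCompletion.ext
        intro m
        rw [AdicCompletion.val_mul, hval, hval, hval, ← map_mul, ← mul_pow]
        apply hQ
        simp [hL]
      map_zero' := by
        apply AdicCompletion.ext
        intro m
        rw [hval, AdicCompletion.val_zero_apply,
          show (0 : S ⧸ (I ^ m • ⊤ : Ideal S)) =
            Ideal.Quotient.mk (I ^ m • ⊤ : Ideal S) (0 ^ p ^ m) from by
              rw [zero_pow (pow_ne_zero m (Fact.out : p.Prime).ne_zero), map_zero]]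
        apply hQ
        rw [hL, map_zero, map_zero]
      map_add' := by
        intro x y
        apply AdicCompletion.ext
        intro m
        rw [AdicCompletion.val_add_apply, hval, hval, hval, ← map_add, ← add_pow_char_pow]
        apply hQ
        simp [hL] } with hΦ
  -- injectivity
  have hinj : Function.Injective Φ := by
    rw [injective_iff_map_eq_zero]
    intro x hx
    apply Perfection.ext
    intro n
    rw [map_zero]
    obtain ⟨m, hnm, hkm⟩ : ∃ m, n ≤ m ∧ k n ≤ m :=
      ⟨max n (k n), le_max_left _ _, le_max_right _ _⟩
    have h0 : (L (Perfection.coeff (S ⧸ I) p m x)) ^ p ^ m ∈ I ^ m := by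
      have h1 : (Φf x).val m = (0 : AdicCompletion I S).val m := by
        rw [show Φf x = 0 from hx]
      rw [hval, AdicCompletion.val_zero_apply, Ideal.Quotient.eq_zero_iff_mem, hsmul] at h1
      exact h1
    have hb : ((L (Perfection.coeff (S ⧸ I) p m x)) ^ p ^ (m - n)) ^ p ^ n ∈ I ^ k n := by
      rw [← pow_mul, ← pow_add, Nat.sub_add_cancel hnm]
      exact Ideal.pow_le_pow_right hkm h0
    have hbI : (L (Perfection.coeff (S ⧸ I) p m x)) ^ p ^ (m - n) ∈ I := by
      have h2 := hk n _ hb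
      rwa [frobInv_pow] at h2
    rw [hcoeff x n (m - n), Nat.add_sub_cancel' hnm, ← hL (Perfection.coeff (S ⧸ I) p m x),
      ← map_pow, Ideal.Quotient.eq_zero_iff_mem]
    exact hbI
  -- surjectivity
  have hsurj : Function.Surjective Φ := by
    intro c
    choose t ht using fun m => Ideal.Quotient.mk_surjective
      (I := (I ^ m • ⊤ : Ideal S)) (c.val m)
    have hcomp : ∀ {m n : ℕ}, m ≤ n → t n - t m ∈ I ^ m := by
      intro m n hmn
      have h2 := c.property hmn
      rw [← ht, ← ht, AdicCompletion.transitionMap_ideal_mk, Ideal.Quotient.eq, hsmul] at h2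
      exact h2
    obtain ⟨kk, hkk1, hkk2, hkkmono⟩ :
        ∃ kk : ℕ → ℕ, (∀ n, k n ≤ kk n) ∧ (∀ n, n ≤ kk n) ∧
          (∀ {m n : ℕ}, m ≤ n → kk m ≤ kk n) := by
      refine ⟨fun n => (Finset.range (n + 1)).sup k + n, fun n => ?_, fun n => Nat.le_add_left n _,
        fun {m n} hmn => ?_⟩
      · exact (Finset.le_sup (Finset.mem_range.mpr (Nat.lt_succ_self n))).trans
          (Nat.le_add_right _ _)
      · exact Nat.add_le_add (Finset.sup_mono (Finset.range_subset_range.mpr (by omega))) hmn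
    have hxcond : ∀ n : ℕ,
        (π (frobInv p S (n + 1) (t (kk (n + 1))))) ^ p = π (frobInv p S n (t (kk n))) := by
      intro n
      rw [← map_pow, frobInv_succ_pow_p, Ideal.Quotient.eq, ← map_sub]
      apply hk n
      apply Ideal.pow_le_pow_right (hkk1 n)
      exact hcomp (hkkmono (Nat.le_succ n))
    refine ⟨⟨fun n => π (frobInv p S n (t (kk n))), hxcond⟩, ?_⟩
    apply AdicCompletion.ext
    intro m
    show (Φf (⟨fun n => π (frobInv p S n (t (kk n))), hxcond⟩ : Perfection (S ⧸ I) p)).val m = c.val m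
    refine (hval _ m).trans ?_
    have hcm : Perfection.coeff (S ⧸ I) p m
        (⟨fun n => π (frobInv p S n (t (kk n))), hxcond⟩ : Perfection (S ⧸ I) p)
        = π (frobInv p S m (t (kk m))) := rfl
    rw [hcm, hQ m (hL (π (frobInv p S m (t (kk m))))), pow_frobInv, ← ht m,
      Ideal.Quotient.eq, hsmul]
    exact hcomp (hkk2 m)
  exact ⟨RingEquiv.ofBijective Φ ⟨hinj, hsurj⟩⟩
end

section
/- Let S be a perfect F_p-algebra and I an ideal. For n ≥ 0 let I^{[p^n]} denote the ideal {x^{p^n} : x ∈ I} (an ideal since S is perfect). Then the p-th power map induces an isomorphism of rings φ^n : S/I → S/I^{[p^n]}, and if I is finitely generated, the filtrations {I^{[p^n]}} and {I^n} define the same topology on S. -/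
/-- Let `S` be a perfect `𝔽_p`-algebra and `I` an ideal.  For `n ≥ 0` let
`I^{[p^n]}` be the ideal of `p^n`-th powers of elements of `I` (equivalently, the image
ideal of `I` under the `n`-th iterate of Frobenius, since Frobenius is a ring
automorphism).  Then the `p^n`-th power map induces a ring isomorphism
`S/I ≃ S/I^{[p^n]}`, and if `I` is finitely generated, the filtrations `{I^{[p^n]}}` and
`{I^n}` define the same topology on `S`. -/
theorem frobenius_power_ideal_iso_and_topology (p : ℕ) [Fact p.Prime]
    (S : Type*) [CommRing S] [CharP S p] [PerfectRing S p] (I : Ideal S) :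
    (∀ n : ℕ,
      (I.map (iterateFrobenius S p n) : Set S) = {y : S | ∃ x ∈ I, y = x ^ p ^ n} ∧
      ∃ e : (S ⧸ I) ≃+* S ⧸ I.map (iterateFrobenius S p n),
        ∀ x : S, e (Ideal.Quotient.mk I x) =
          Ideal.Quotient.mk (I.map (iterateFrobenius S p n)) (x ^ p ^ n)) ∧
    (I.FG →
      (∀ n : ℕ, ∃ m : ℕ, I ^ m ≤ I.map (iterateFrobenius S p n)) ∧
      (∀ n : ℕ, ∃ m : ℕ, I.map (iterateFrobenius S p m) ≤ I ^ n)) := by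
  have hmapeq : ∀ n : ℕ, I.map (iterateFrobenius S p n)
      = I.map ((iterateFrobeniusEquiv S p n : S →+* S)) := by
    intro n
    rfl
  constructor
  · intro n
    constructor
    · ext y
      simp only [SetLike.mem_coe, Set.mem_setOf_eq]
      rw [Ideal.mem_map_iff_of_surjective (iterateFrobenius S p n) (iterateFrobeniusEquiv S p n).surjective]
      simp only [iterateFrobenius_def, eq_comm]
    · refine ⟨Ideal.quotientEquiv I _ (iterateFrobeniusEquiv S p n) (hmapeq n), fun x => ?_⟩
      rw [Ideal.quotientEquiv_mk]
      rfl
  · intro hfg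
    constructor
    · intro n
      apply Ideal.exists_pow_le_of_le_radical_of_fg _ hfg
      intro x hx
      rw [Ideal.mem_radical_iff]
      exact ⟨p ^ n, by simpa [iterateFrobenius_def] using
        Ideal.mem_map_of_mem (iterateFrobenius S p n) hx⟩
    · intro n
      refine ⟨n, ?_⟩
      rw [Ideal.map_le_iff_le_comap]
      intro x hx
      have h1 : x ^ p ^ n ∈ I ^ p ^ n := Ideal.pow_mem_pow hx _
      have h2 : I ^ p ^ n ≤ I ^ n :=
        Ideal.pow_le_pow_right (Nat.le_of_lt (Nat.lt_pow_self (Fact.out : p.Prime).one_lt : n < p ^ n))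
      simpa [Ideal.mem_comap, iterateFrobenius_def] using h2 h1
end

section
/- Let A be an Artinian local ring with residue field F_p and maximal ideal m, and let R be a perfect F_p-algebra. Set W_A(R) := A ⊗_{Z_p} W(R), where W(R) is the ring of p-typical Witt vectors. Then the tilt W_A(R)^♭ := lim_{x↦x^p} W_A(R)/p is isomorphic to R. -/
set_option maxHeartbeats 1200000
set_option synthInstance.maxHeartbeats 400000


open scoped TensorProduct

section Aux

variable {p : ℕ} [Fact p.Prime]

/-- Iterated `coeff_pow_p'`. -/
private theorem perfection_coeff_pow {B : Type*} [CommSemiring B] [CharP B p]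
    (a : Ring.Perfection B p) (n k : ℕ) :
    Perfection.coeff B p (n + k) a ^ p ^ k = Perfection.coeff B p n a := by
  induction k with
  | zero => simp
  | succ k ih =>
      rw [pow_succ', pow_mul, ← ih]
      congr 1
      rw [← Nat.add_assoc]
      exact Perfection.coeff_pow_p' a (n + k)

/-- If `f : B →+* S` is surjective with kernel killed by a uniform power `p ^ k`,
then the induced map on perfections is bijective. -/
private theorem perfection_map_bijective {B S : Type*} [CommRing B] [CharP B p]
    [CommRing S] [CharP S p] (f : B →+* S) (hs : Function.Surjective f)
    (k : ℕ) (hk : ∀ x, f x = 0 → x ^ p ^ k = 0) :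
    Function.Bijective (Perfection.map p f) := by
  constructor
  · rw [injective_iff_map_eq_zero]
    intro a ha
    have hcoe : ∀ n, f (Perfection.coeff B p n a) = 0 := by
      intro n
      have := congrArg (Perfection.coeff S p n) ha
      rwa [Perfection.coeff_map, map_zero] at this
    ext n
    rw [map_zero, ← perfection_coeff_pow a n k]
    exact hk _ (hcoe (n + k))
  · intro y
    set g : S → B := Function.surjInv hs with hg
    have hfg : ∀ s, f (g s) = s := Function.surjInv_eq hs
    have key : ∀ n, (g (Perfection.coeff S p (n + 1 + k) y) ^ p) ^ p ^ k
        = g (Perfection.coeff S p (n + k) y) ^ p ^ k := by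
      intro n
      set c := g (Perfection.coeff S p (n + 1 + k) y) ^ p with hc
      set d := g (Perfection.coeff S p (n + k) y) with hd
      have hfc : f c = Perfection.coeff S p (n + k) y := by
        rw [hc, map_pow, hfg, Nat.add_right_comm n 1 k]
        exact Perfection.coeff_pow_p' y (n + k)
      have hfd : f d = Perfection.coeff S p (n + k) y := hfg _
      have hsub : (c - d) ^ p ^ k = 0 := hk _ (by rw [map_sub, hfc, hfd, sub_self])
      calc c ^ p ^ k = ((c - d) + d) ^ p ^ k := by ring_nf
        _ = (c - d) ^ p ^ k + d ^ p ^ k := by rw [add_pow_char_pow]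
        _ = d ^ p ^ k := by rw [hsub, zero_add]
    refine ⟨⟨fun n => g (Perfection.coeff S p (n + k) y) ^ p ^ k, ?_⟩, ?_⟩
    · intro n
      have : (g (Perfection.coeff S p (n + 1 + k) y) ^ p ^ k) ^ p
          = (g (Perfection.coeff S p (n + 1 + k) y) ^ p) ^ p ^ k := by
        rw [← pow_mul, ← pow_mul, Nat.mul_comm]
      rw [this, key n]
    · ext n
      show f (g (Perfection.coeff S p (n + k) y) ^ p ^ k) = Perfection.coeff S p n y
      rw [map_pow, hfg]
      exact perfection_coeff_pow y n k

/-- In a perfect ring of characteristic `p`, a Witt vector with vanishing zeroth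
coefficient is divisible by `p`. -/
private theorem wittVector_eq_p_mul {R : Type*} [CommRing R] [CharP R p] [PerfectRing R p]
    (w : WittVector p R) (hw : w.coeff 0 = 0) :
    ∃ u : WittVector p R, w = p * u := by
  -- first, `w` is a Verschiebung
  have hV : w = WittVector.verschiebung (WittVector.mk p fun n => w.coeff (n + 1)) := by
    ext n
    cases n with
    | zero => rw [WittVector.verschiebung_coeff_zero]; exact hw
    | succ n => rw [WittVector.verschiebung_coeff_succ]; rfl
  set y := WittVector.mk p fun n => w.coeff (n + 1) with hy
  refine ⟨(WittVector.frobeniusEquiv p R).symm y, ?_⟩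
  have := WittVector.verschiebung_frobenius ((WittVector.frobeniusEquiv p R).symm y)
  rw [show WittVector.frobenius ((WittVector.frobeniusEquiv p R).symm y)
        = WittVector.frobeniusEquiv p R ((WittVector.frobeniusEquiv p R).symm y) from rfl,
      RingEquiv.apply_symm_apply] at this
  rw [hV, this, mul_comm]

end Aux

/-- Let `(A, m)` be an Artinian local ring with residue field `𝔽_p` and
let `R` be a perfect `𝔽_p`-algebra.  Set `W_A(R) := A ⊗_{ℤ_p} W(R)` (since `p` is
nilpotent in `A`, tensoring over `ℤ_p` agrees with tensoring over `ℤ`, so we work with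
`A ⊗_ℤ W(R)`).  Then the tilt `W_A(R)^♭ = lim_{x ↦ x^p} W_A(R)/p` is isomorphic to `R`. -/
theorem tilt_of_WA_iso (p : ℕ) [Fact p.Prime]
    (A : Type*) [CommRing A] [IsArtinianRing A] [IsLocalRing A]
    (hres : Nonempty (IsLocalRing.ResidueField A ≃+* ZMod p))
    (R : Type*) [CommRing R] [CharP R p] [PerfectRing R p]
    [CharP ((A ⊗[ℤ] WittVector p R) ⧸
      (Ideal.span {(p : A ⊗[ℤ] WittVector p R)})) p] :
    Nonempty (@Perfection ((A ⊗[ℤ] WittVector p R) ⧸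
      (Ideal.span {(p : A ⊗[ℤ] WittVector p R)}))
      (@NPow.toPow _ (@Monoid.toNPow _ (CommMonoid.toMonoid (M := (A ⊗[ℤ] WittVector p R) ⧸
      (Ideal.span {(p : A ⊗[ℤ] WittVector p R)}))))) p ≃+* R) := by
  classical
  obtain ⟨e⟩ := hres
  haveI : Fact (Nat.Prime p) := ‹_›
  haveI : NeZero p := ⟨(Fact.out (p := p.Prime)).ne_zero⟩
  -- the residue map `A → R`
  set gA : A →+* R :=
    (ZMod.castHom (dvd_refl p) R).comp (e.toRingHom.comp (IsLocalRing.residue A)) with hgA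
  -- the map `T = A ⊗ W(R) → R`
  set φ : A ⊗[ℤ] WittVector p R →+* R :=
    (Algebra.TensorProduct.lift gA.toIntAlgHom
      (WittVector.constantCoeff (p := p) (R := R)).toIntAlgHom
      (fun _ _ => Commute.all _ _)).toRingHom with hφ
  have hφ_tmul : ∀ (a : A) (w : WittVector p R), φ (a ⊗ₜ[ℤ] w) = gA a * w.coeff 0 := by
    intro a w
    simp only [hφ, AlgHom.toRingHom_eq_coe, RingHom.coe_coe, Algebra.TensorProduct.lift_tmul,
      RingHom.toIntAlgHom_coe]
    rfl
  -- `φ` kills `span {p}`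
  have hφp : ∀ x ∈ Ideal.span {(p : A ⊗[ℤ] WittVector p R)}, φ x = 0 := by
    intro x hx
    rw [Ideal.mem_span_singleton] at hx
    obtain ⟨c, rfl⟩ := hx
    rw [map_mul, map_natCast, CharP.cast_eq_zero, zero_mul]
  set f := Ideal.Quotient.lift _ φ hφp with hf
  set q1 : A ⊗[ℤ] WittVector p R →+* _ := Ideal.Quotient.mk (Ideal.span {(p : A ⊗[ℤ] WittVector p R)}) with hq1
  have hfq : ∀ x : A ⊗[ℤ] WittVector p R, f (q1 x) = φ x := fun x => rfl
  -- `f` is surjective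
  have hfs : Function.Surjective f := by
    intro r
    refine ⟨q1 ((1 : A) ⊗ₜ[ℤ] WittVector.mk p (fun n => if n = 0 then r else 0)), ?_⟩
    rw [hfq, hφ_tmul, map_one, one_mul]
    rfl
  -- `p = 0` in `B`
  have hpB : ((p : ℕ) : (A ⊗[ℤ] WittVector p R) ⧸
      (Ideal.span {(p : A ⊗[ℤ] WittVector p R)})) = 0 := by
    rw [show ((p : ℕ) : (A ⊗[ℤ] WittVector p R) ⧸
        (Ideal.span {(p : A ⊗[ℤ] WittVector p R)})) = q1 (p : A ⊗[ℤ] WittVector p R) from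
      (map_natCast q1 p).symm]
    exact Ideal.Quotient.eq_zero_iff_mem.2 (Ideal.subset_span rfl)
  -- the ideal `J` generated by the image of the maximal ideal
  set ρ : A →+* _ := q1.comp Algebra.TensorProduct.includeLeftRingHom with hρ
  set J := Ideal.map ρ (IsLocalRing.maximalIdeal A) with hJ
  -- J is contained in the kernel of f
  have hJf : ∀ b ∈ J, f b = 0 := by
    intro b hb
    have : J ≤ RingHom.ker f := by
      rw [hJ, Ideal.map_le_iff_le_comap]
      intro a ha
      have : f (ρ a) = gA a * (1 : WittVector p R).coeff 0 := by
        rw [hρ, RingHom.comp_apply, hfq]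
        exact hφ_tmul a 1
      have ha0 : IsLocalRing.residue A a = 0 := Ideal.Quotient.eq_zero_iff_mem.2 ha
      rw [Ideal.mem_comap, RingHom.mem_ker, this, WittVector.one_coeff_zero, mul_one, hgA,
        RingHom.comp_apply, RingHom.comp_apply, ha0]
      simp
    exact this hb
  -- every element of B is congruent mod J to the image of a Witt vector
  have hcong : ∀ b : (A ⊗[ℤ] WittVector p R) ⧸ (Ideal.span {(p : A ⊗[ℤ] WittVector p R)}),
      ∃ w : WittVector p R, b - q1 ((1 : A) ⊗ₜ[ℤ] w) ∈ J := by
    intro b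
    obtain ⟨x, rfl⟩ := Ideal.Quotient.mk_surjective b
    induction x using TensorProduct.induction_on with
    | zero => exact ⟨0, by simp⟩
    | add x y hx hy =>
        obtain ⟨w₁, hw₁⟩ := hx
        obtain ⟨w₂, hw₂⟩ := hy
        refine ⟨w₁ + w₂, ?_⟩
        have : q1 (x + y) - q1 (1 ⊗ₜ[ℤ] (w₁ + w₂))
            = (q1 x - q1 (1 ⊗ₜ[ℤ] w₁)) + (q1 y - q1 (1 ⊗ₜ[ℤ] w₂)) := by
          rw [show (1 : A) ⊗ₜ[ℤ] (w₁ + w₂) = (1 : A) ⊗ₜ[ℤ] w₁ + (1 : A) ⊗ₜ[ℤ] w₂ from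
            TensorProduct.tmul_add _ _ _]
          rw [map_add, map_add]; ring
        rw [this]
        exact J.add_mem hw₁ hw₂
    | tmul a w =>
        set c : ℕ := (e (IsLocalRing.residue A a)).val with hc
        have hac : a - (c : A) ∈ IsLocalRing.maximalIdeal A := by
          have h0 : IsLocalRing.residue A (a - (c : A)) = 0 := by
            rw [map_sub, map_natCast]
            have h1 : e (IsLocalRing.residue A a) = (c : ZMod p) :=
              (ZMod.natCast_rightInverse _).symm
            have h2 : IsLocalRing.residue A a = e.symm (c : ZMod p) := by
              rw [← h1, RingEquiv.symm_apply_apply]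
            rw [h2, ← map_natCast e.symm, sub_self]
          exact Ideal.Quotient.eq_zero_iff_mem.1 h0
        refine ⟨(c : WittVector p R) * w, ?_⟩
        have h1 : (a ⊗ₜ[ℤ] w : A ⊗[ℤ] WittVector p R)
            = (a ⊗ₜ[ℤ] (1 : WittVector p R)) * ((1 : A) ⊗ₜ[ℤ] w) := by
          rw [Algebra.TensorProduct.tmul_mul_tmul, mul_one, one_mul]
        have h2 : ((1 : A) ⊗ₜ[ℤ] ((c : WittVector p R) * w) : A ⊗[ℤ] WittVector p R)
            = ((1 : A) ⊗ₜ[ℤ] (c : WittVector p R)) * ((1 : A) ⊗ₜ[ℤ] w) := by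
          rw [Algebra.TensorProduct.tmul_mul_tmul, mul_one]
        have h3 : q1 ((1 : A) ⊗ₜ[ℤ] (c : WittVector p R)) = ρ (c : A) := by
          rw [show ((1 : A) ⊗ₜ[ℤ] (c : WittVector p R) : A ⊗[ℤ] WittVector p R)
              = (Algebra.TensorProduct.includeRight (c : WittVector p R) :
                A ⊗[ℤ] WittVector p R) from rfl,
            map_natCast, map_natCast q1, map_natCast ρ]
        have h4 : q1 (a ⊗ₜ[ℤ] w) - q1 ((1 : A) ⊗ₜ[ℤ] ((c : WittVector p R) * w))
            = ρ (a - (c : A)) * q1 ((1 : A) ⊗ₜ[ℤ] w) := by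
          rw [h1, h2, map_mul, map_mul, h3, map_sub]
          exact (sub_mul (ρ a) (ρ (c : A)) (q1 ((1 : A) ⊗ₜ[ℤ] w))).symm
        rw [h4]
        have hm := J.mul_mem_left (q1 ((1 : A) ⊗ₜ[ℤ] w)) (Ideal.mem_map_of_mem ρ hac)
        have e2 : ρ (a - (c : A)) * q1 ((1 : A) ⊗ₜ[ℤ] w) = q1 ((1 : A) ⊗ₜ[ℤ] w) * ρ (a - (c : A)) :=
          mul_comm (G := ((A ⊗[ℤ] WittVector p R) ⧸ Ideal.span {(p : A ⊗[ℤ] WittVector p R)})) _ _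
        rw [e2]
        exact hm
  -- the kernel of f is contained in J
  have hker : ∀ b : (A ⊗[ℤ] WittVector p R) ⧸ (Ideal.span {(p : A ⊗[ℤ] WittVector p R)}),
      f b = 0 → b ∈ J := by
    intro b hb
    obtain ⟨w, hw⟩ := hcong b
    have hfw : f (q1 ((1 : A) ⊗ₜ[ℤ] w)) = 0 := by
      have := hJf _ hw
      rw [map_sub, hb, zero_sub, neg_eq_zero] at this
      exact this
    rw [hfq, hφ_tmul, map_one, one_mul] at hfw
    obtain ⟨u, hu⟩ := wittVector_eq_p_mul w hfw
    have hq0 : q1 ((1 : A) ⊗ₜ[ℤ] w) = 0 := by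
      rw [hu]
      rw [show (1 : A) ⊗ₜ[ℤ] ((p : WittVector p R) * u)
          = Algebra.TensorProduct.includeRight ((p : WittVector p R) * u) from rfl]
      rw [map_mul, map_natCast, map_mul, map_natCast, hpB]
      exact zero_mul (M₀ := ((A ⊗[ℤ] WittVector p R) ⧸ Ideal.span {(p : A ⊗[ℤ] WittVector p R)})) _
    have := hw
    rwa [hq0, sub_zero] at this
  -- the maximal ideal is nilpotent
  obtain ⟨n, hn⟩ : IsNilpotent (IsLocalRing.maximalIdeal A) := by
    rw [← IsLocalRing.jacobson_eq_maximalIdeal (⊥ : Ideal A) bot_ne_top]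
    exact IsArtinianRing.isNilpotent_jacobson_bot
  -- uniform nilpotency exponent for ker f
  have hkill : ∀ x : (A ⊗[ℤ] WittVector p R) ⧸ (Ideal.span {(p : A ⊗[ℤ] WittVector p R)}),
      f x = 0 → x ^ p ^ n = 0 := by
    intro x hx
    have hxJ : x ∈ J := hker x hx
    have hxn : x ^ n ∈ J ^ n := Ideal.pow_mem_pow hxJ n
    have hJn : J ^ n = ⊥ := by
      have h := Ideal.map_pow ρ (IsLocalRing.maximalIdeal A) n
      rw [hn] at h
      rw [hJ]
      exact h.symm.trans (by simp)
    have hxn0 : x ^ n = 0 := by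
      rw [hJn] at hxn
      simpa using hxn
    have hle : n ≤ p ^ n := Nat.le_of_lt (Nat.lt_pow_self (n := n) (Fact.out (p := p.Prime)).one_lt)
    have hsplit : x ^ p ^ n = x ^ n * x ^ (p ^ n - n) := by
      rw [← pow_add, Nat.add_sub_cancel' hle]
    rw [hsplit]
    rw [hxn0]
    exact zero_mul (M₀ := ((A ⊗[ℤ] WittVector p R) ⧸ Ideal.span {(p : A ⊗[ℤ] WittVector p R)})) _
  -- conclude
  have hbij : Function.Bijective (Perfection.map p (R := ((A ⊗[ℤ] WittVector p R) ⧸ Ideal.span {(p : A ⊗[ℤ] WittVector p R)})) (S := R) f) :=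
    perfection_map_bijective (p := p) (B := ((A ⊗[ℤ] WittVector p R) ⧸ Ideal.span {(p : A ⊗[ℤ] WittVector p R)})) (S := R) f hfs n hkill
  exact ⟨(RingEquiv.ofBijective (Perfection.map p (R := ((A ⊗[ℤ] WittVector p R) ⧸ Ideal.span {(p : A ⊗[ℤ] WittVector p R)})) (S := R) f) hbij).trans
    (PerfectionMap.id p R).equiv.symm⟩
end

section
/- Let B be a commutative ring in which p is nilpotent. Then the natural (multiplicative) bijection lim_{x↦x^p} B → lim_{x↦x^p} B/p is a bijection of sets, and hence the inverse limit lim_{x↦x^p} B of the p-power maps carries a natural commutative ring structure (the tilt B^♭), with addition given by (a_n) + (b_n) = (c_n) where c_n = lim_k (a_{n+k} + b_{n+k})^{p^k} mod p. -/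
section Aux

variable {p : ℕ} {B : Type*} [CommRing B]

lemma aux_step (_hp : p.Prime) {a b : B} (h1 : (p : B) ∣ a - b) {m : ℕ}
    (h2 : (p : B) ^ m ∣ a - b) : (p : B) ^ (m + 1) ∣ a ^ p - b ^ p := by
  have hgeo : (∑ i ∈ Finset.range p, a ^ i * b ^ (p - 1 - i)) * (a - b)
      = a ^ p - b ^ p := geom_sum₂_mul a b p
  have hsum : (p : B) ∣ ∑ i ∈ Finset.range p, a ^ i * b ^ (p - 1 - i) := by
    have hsplit : (∑ i ∈ Finset.range p, a ^ i * b ^ (p - 1 - i))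
        = (∑ i ∈ Finset.range p, (a ^ i - b ^ i) * b ^ (p - 1 - i))
          + (p : B) * b ^ (p - 1) := by
      have h2' : ∀ i ∈ Finset.range p, b ^ i * b ^ (p - 1 - i) = b ^ (p - 1) := by
        intro i hi
        rw [Finset.mem_range] at hi
        rw [← pow_add]
        congr 1
        omega
      calc (∑ i ∈ Finset.range p, a ^ i * b ^ (p - 1 - i))
          = (∑ i ∈ Finset.range p, ((a ^ i - b ^ i) * b ^ (p - 1 - i)
              + b ^ i * b ^ (p - 1 - i))) := by
            refine Finset.sum_congr rfl fun i _ => ?_; ring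
        _ = (∑ i ∈ Finset.range p, (a ^ i - b ^ i) * b ^ (p - 1 - i))
              + ∑ i ∈ Finset.range p, b ^ i * b ^ (p - 1 - i) :=
            Finset.sum_add_distrib
        _ = (∑ i ∈ Finset.range p, (a ^ i - b ^ i) * b ^ (p - 1 - i))
              + (p : B) * b ^ (p - 1) := by
            rw [Finset.sum_congr rfl h2', Finset.sum_const, Finset.card_range,
              nsmul_eq_mul]
    rw [hsplit]
    refine dvd_add (Finset.dvd_sum fun i _ => ?_) (Dvd.intro _ rfl)
    exact dvd_mul_of_dvd_left (h1.trans (sub_dvd_pow_sub_pow a b i)) _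
  calc (p : B) ^ (m + 1) = (p : B) * (p : B) ^ m := by ring
    _ ∣ (∑ i ∈ Finset.range p, a ^ i * b ^ (p - 1 - i)) * (a - b) :=
        mul_dvd_mul hsum h2
    _ = a ^ p - b ^ p := hgeo

lemma aux_pow_dvd (hp : p.Prime) {x y : B} (h : (p : B) ∣ x - y) (m : ℕ) :
    (p : B) ^ (m + 1) ∣ x ^ p ^ m - y ^ p ^ m := by
  induction m with
  | zero => simpa using h
  | succ m ih =>
    have h1 : (p : B) ∣ x ^ p ^ m - y ^ p ^ m :=
      dvd_trans (dvd_pow_self (p : B) (Nat.succ_ne_zero m)) ih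
    have := aux_step hp h1 ih
    rwa [← pow_mul, ← pow_mul, ← pow_succ] at this

end Aux

lemma lim_pow {R : Type*} [CommMonoid R] {p : ℕ} {f : ℕ → R}
    (hf : ∀ n, f (n + 1) ^ p = f n) (n k : ℕ) : f (n + k) ^ p ^ k = f n := by
  induction k with
  | zero => simp
  | succ k ih =>
    rw [pow_succ', pow_mul]
    show (f (n + k + 1) ^ p) ^ p ^ k = f n
    rw [hf (n + k)]; exact ih

lemma frob_add {R : Type*} [CommRing R] {p : ℕ} (hp : p.Prime) (hpR : (p : R) = 0)
    (u v : R) (k : ℕ) : (u + v) ^ p ^ k = u ^ p ^ k + v ^ p ^ k := by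
  rw [add_pow_prime_pow_eq hp, hpR]; ring

/-- Let `B` be a commutative ring in which `p` is nilpotent.  Then the
natural map `lim_{x ↦ x^p} B → lim_{x ↦ x^p} B/p` is a bijection; hence the inverse limit
`lim_{x ↦ x^p} B` carries a natural commutative ring structure (the tilt `B^♭`), whose
addition is given by `(a_n) + (b_n) = (c_n)` with
`c_n = lim_k (a_{n+k} + b_{n+k})^{p^k}` (the limit being eventually constant), reducing
mod `p` to the addition of the perfection of `B/p`. -/
theorem tilt_bijection_and_addition (p : ℕ) [Fact p.Prime]
    (B : Type*) [CommRing B] (N : ℕ) (hN : (p : B) ^ N = 0) :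
    Function.Bijective
      (fun f : {f : ℕ → B // ∀ n, (f (n + 1)) ^ p = f n} =>
        (⟨fun n => Ideal.Quotient.mk (Ideal.span {(p : B)}) (f.1 n),
          fun n => by rw [← map_pow]; exact congrArg _ (f.2 n)⟩ :
          {g : ℕ → B ⧸ Ideal.span {(p : B)} // ∀ n, (g (n + 1)) ^ p = g n})) ∧
    ∀ a b : {f : ℕ → B // ∀ n, (f (n + 1)) ^ p = f n},
      ∃ c : {f : ℕ → B // ∀ n, (f (n + 1)) ^ p = f n},
        (∀ n, Ideal.Quotient.mk (Ideal.span {(p : B)}) (c.1 n) =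
            Ideal.Quotient.mk (Ideal.span {(p : B)}) (a.1 n) +
            Ideal.Quotient.mk (Ideal.span {(p : B)}) (b.1 n)) ∧
        ∀ n, ∃ K, ∀ k ≥ K, (a.1 (n + k) + b.1 (n + k)) ^ p ^ k = c.1 n := by
  have hp : p.Prime := Fact.out
  set q := Ideal.Quotient.mk (Ideal.span {(p : B)}) with hqdef
  have hq : ∀ x y : B, q x = q y ↔ (p : B) ∣ x - y := by
    intro x y
    rw [Ideal.Quotient.mk_eq_mk_iff_sub_mem, Ideal.mem_span_singleton]
  have freeze : ∀ x y : B, q x = q y → ∀ m, N ≤ m → x ^ p ^ m = y ^ p ^ m := by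
    intro x y h m hm
    have hN0 : x ^ p ^ N = y ^ p ^ N := by
      obtain ⟨t, ht⟩ := aux_pow_dvd hp ((hq x y).mp h) N
      have : x ^ p ^ N - y ^ p ^ N = 0 := by
        rw [ht, pow_succ, hN]; ring
      exact sub_eq_zero.mp this
    calc x ^ p ^ m = (x ^ p ^ N) ^ p ^ (m - N) := by
          rw [← pow_mul, ← pow_add, Nat.add_sub_cancel' hm]
      _ = (y ^ p ^ N) ^ p ^ (m - N) := by rw [hN0]
      _ = y ^ p ^ m := by rw [← pow_mul, ← pow_add, Nat.add_sub_cancel' hm]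
  have hqp : (p : B ⧸ Ideal.span {(p : B)}) = 0 := by
    rw [← map_natCast q p]
    exact Ideal.Quotient.eq_zero_iff_mem.mpr (Ideal.mem_span_singleton_self _)
  constructor
  · constructor
    · -- injectivity
      intro f g h
      have h' : ∀ n, q (f.1 n) = q (g.1 n) := fun n =>
        congrFun (congrArg Subtype.val h) n
      apply Subtype.ext; funext n
      calc f.1 n = f.1 (n + N) ^ p ^ N := (lim_pow f.2 n N).symm
        _ = g.1 (n + N) ^ p ^ N := freeze _ _ (h' (n + N)) N le_rfl
        _ = g.1 n := lim_pow g.2 n N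
    · -- surjectivity
      intro g
      choose x hx using fun n => Ideal.Quotient.mk_surjective (I := Ideal.span {(p : B)}) (g.1 n)
      have hf : ∀ n, (x (n + N + 1) ^ p) ^ p ^ N = x (n + N) ^ p ^ N := by
        intro n
        refine freeze _ _ ?_ N le_rfl
        rw [map_pow, hx, hx, g.2 (n + N)]
      refine ⟨⟨fun n => x (n + N) ^ p ^ N, fun n => ?_⟩, Subtype.ext (funext fun n => ?_)⟩
      · show (x (n + 1 + N) ^ p ^ N) ^ p = x (n + N) ^ p ^ N
        have e : n + 1 + N = n + N + 1 := by omega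
        rw [e, ← pow_mul, pow_mul']
        exact hf n
      · show q (x (n + N) ^ p ^ N) = g.1 n
        rw [map_pow, hx]
        exact lim_pow g.2 n N
  · -- addition
    intro a b
    set s : ℕ → B := fun n => a.1 n + b.1 n with hsdef
    have hs : ∀ n, q (s (n + 1) ^ p) = q (s n) := by
      intro n
      have : q (s (n + 1)) ^ p ^ 1 = q (a.1 (n + 1)) ^ p ^ 1 + q (b.1 (n + 1)) ^ p ^ 1 := by
        rw [hsdef]; simp only [map_add]
        exact frob_add hp hqp _ _ 1
      simp only [pow_one] at this
      rw [map_pow, this, ← map_pow, ← map_pow, a.2 n, b.2 n, hsdef, map_add]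
    refine ⟨⟨fun n => s (n + N) ^ p ^ N, fun n => ?_⟩, fun n => ?_, fun n => ⟨N, fun k hk => ?_⟩⟩
    · show (s (n + 1 + N) ^ p ^ N) ^ p = s (n + N) ^ p ^ N
      have e : n + 1 + N = n + N + 1 := by omega
      rw [e, ← pow_mul, pow_mul']
      exact freeze _ _ (hs (n + N)) N le_rfl
    · show q (s (n + N) ^ p ^ N) = q (a.1 n) + q (b.1 n)
      rw [map_pow, hsdef]
      simp only [map_add]
      rw [frob_add hp hqp, ← map_pow, ← map_pow, lim_pow a.2 n N, lim_pow b.2 n N]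
    · -- eventual constancy
      obtain ⟨j, rfl⟩ : ∃ j, k = N + j := ⟨k - N, by omega⟩
      show s (n + (N + j)) ^ p ^ (N + j) = s (n + N) ^ p ^ N
      clear hk
      induction j with
      | zero => rfl
      | succ j ih =>
        have e : n + (N + (j + 1)) = n + (N + j) + 1 := by omega
        rw [e]
        show s (n + (N + j) + 1) ^ p ^ (N + j + 1) = s (n + N) ^ p ^ N
        rw [pow_succ', pow_mul,
          freeze _ _ (hs (n + (N + j))) (N + j) (Nat.le_add_right N j)]
        exact ih
end

section
/- Let A be a Q-algebra and X = Spec B a G_a-module scheme over A (an affine scheme with a module structure over the ring scheme G_a, functorially in A-algebras). Then there is an A-module M and an isomorphism of G_a-modules X ≅ Spec(Sym_A(M)); moreover one can take M = B_1, the degree-1 part of the induced grading on B. -/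
open TensorProduct

universe u v w

namespace GaModuleAux

open Coalgebra DirectSum Finset

variable {A : Type u} {B : Type v} {C : Type w}
variable [CommRing A] [CommRing B] [CommRing C]

section Conv

variable [Bialgebra A B] [Algebra A C]

/-- Convolution powers of `φ` (left-iterated). -/
noncomputable def T (φ : B →ₗ[A] C) : ℕ → (B →ₗ[A] C)
  | 0 => (Algebra.linearMap A C) ∘ₗ Coalgebra.counit
  | (n+1) => (LinearMap.mul' A C) ∘ₗ (TensorProduct.map φ (T φ n)) ∘ₗ Coalgebra.comul

@[simp] lemma T_zero_apply (φ : B →ₗ[A] C) (b : B) :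
    T φ 0 b = algebraMap A C (Coalgebra.counit (R := A) b) := rfl

lemma T_succ (φ : B →ₗ[A] C) (n : ℕ) :
    T φ (n+1) = (LinearMap.mul' A C) ∘ₗ (TensorProduct.map φ (T φ n)) ∘ₗ Coalgebra.comul := rfl

lemma T_succ_apply (φ : B →ₗ[A] C) (n : ℕ) (x : B) {ι : Type*} (r : Coalgebra.Repr A x ι) :
    T φ (n+1) x = ∑ i ∈ r.index, φ (r.left i) * T φ n (r.right i) := by
  rw [T_succ]
  simp only [LinearMap.coe_comp, Function.comp_apply, ← r.eq, map_sum,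
    TensorProduct.map_tmul, LinearMap.mul'_apply]

lemma sum_counit_smul (x : B) {ι : Type*} (r : Coalgebra.Repr A x ι) :
    ∑ i ∈ r.index, Coalgebra.counit (R := A) (r.left i) • r.right i = x := by
  have h := congrArg (TensorProduct.lid A B) (Coalgebra.sum_counit_tmul_eq r)
  simp only [map_sum, TensorProduct.lid_tmul, one_smul] at h
  exact h

lemma sum_smul_counit (x : B) {ι : Type*} (r : Coalgebra.Repr A x ι) :
    ∑ i ∈ r.index, Coalgebra.counit (R := A) (r.right i) • r.left i = x := by
  have h := congrArg (TensorProduct.rid A B) (Coalgebra.sum_tmul_counit_eq r)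
  simp only [map_sum, TensorProduct.rid_tmul, one_smul] at h
  exact h

lemma conv_unit_left (ψ : B →ₗ[A] C) (y : B) {ι : Type*} (r : Coalgebra.Repr A y ι) :
    ∑ j ∈ r.index, algebraMap A C (Coalgebra.counit (R := A) (r.left j)) * ψ (r.right j) = ψ y := by
  have : ∀ j, algebraMap A C (Coalgebra.counit (R := A) (r.left j)) * ψ (r.right j)
      = ψ (Coalgebra.counit (R := A) (r.left j) • r.right j) := by
    intro j; rw [map_smul, Algebra.smul_def]
  rw [Finset.sum_congr rfl (fun j _ => this j), ← map_sum, sum_counit_smul]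

lemma conv_unit_right (ψ : B →ₗ[A] C) (y : B) {ι : Type*} (r : Coalgebra.Repr A y ι) :
    ∑ j ∈ r.index, ψ (r.left j) * algebraMap A C (Coalgebra.counit (R := A) (r.right j)) = ψ y := by
  have : ∀ j, ψ (r.left j) * algebraMap A C (Coalgebra.counit (R := A) (r.right j))
      = ψ (Coalgebra.counit (R := A) (r.right j) • r.left j) := by
    intro j; rw [map_smul, Algebra.smul_def, mul_comm]
  rw [Finset.sum_congr rfl (fun j _ => this j), ← map_sum, sum_smul_counit]

lemma T_one_apply (φ : B →ₗ[A] C) (x : B) : T φ 1 x = φ x := by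
  rw [T_succ_apply φ 0 x (Coalgebra.Repr.arbitrary A x)]
  simpa using conv_unit_right φ x (Coalgebra.Repr.arbitrary A x)

end Conv


section Graded

variable [Bialgebra A B] [Algebra A C]
variable (ℬ : ℕ → Submodule A B) [GradedAlgebra ℬ]

lemma proj_mem (j : ℕ) (x : B) : GradedAlgebra.proj ℬ j x ∈ ℬ j := by
  rw [GradedAlgebra.proj_apply]; exact SetLike.coe_mem _

lemma sum_proj_eq (x : B) :
    ∃ N : ℕ, ∀ n, N ≤ n → ∑ j ∈ Finset.range n, GradedAlgebra.proj ℬ j x = x := by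
  classical
  refine ⟨(DirectSum.decompose ℬ x).support.sup id + 1, fun n hn => ?_⟩
  have hsub : (DirectSum.decompose ℬ x).support ⊆ Finset.range n := by
    intro m hm
    have : id m ≤ (DirectSum.decompose ℬ x).support.sup id := Finset.le_sup hm
    simp only [id] at this
    exact Finset.mem_range.mpr (lt_of_lt_of_le (Nat.lt_succ_of_le this) hn)
  rw [eq_comm]
  conv_lhs => rw [← DirectSum.sum_support_decompose ℬ x]
  simp only [GradedAlgebra.proj_apply]
  refine Finset.sum_subset hsub ?_
  intro j _ hj
  rw [DFinsupp.notMem_support_iff.mp hj]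
  rfl

lemma sum_proj_tmul (t : B ⊗[A] B) :
    ∃ N : ℕ, ∀ n, N ≤ n →
      ∑ q ∈ Finset.range n ×ˢ Finset.range n,
        TensorProduct.map (GradedAlgebra.proj ℬ q.1) (GradedAlgebra.proj ℬ q.2) t = t := by
  induction t using TensorProduct.induction_on with
  | zero => exact ⟨0, fun n _ => by simp⟩
  | tmul x y =>
    obtain ⟨Nx, hx⟩ := sum_proj_eq ℬ x
    obtain ⟨Ny, hy⟩ := sum_proj_eq ℬ y
    refine ⟨max Nx Ny, fun n hn => ?_⟩
    rw [Finset.sum_product]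
    simp only [TensorProduct.map_tmul]
    calc ∑ j ∈ Finset.range n, ∑ k ∈ Finset.range n,
          GradedAlgebra.proj ℬ j x ⊗ₜ[A] GradedAlgebra.proj ℬ k y
        = ∑ j ∈ Finset.range n,
            GradedAlgebra.proj ℬ j x ⊗ₜ[A] (∑ k ∈ Finset.range n, GradedAlgebra.proj ℬ k y) := by
          refine Finset.sum_congr rfl fun j _ => ?_
          rw [TensorProduct.tmul_sum]
      _ = x ⊗ₜ[A] y := by
          rw [hy n (le_trans (le_max_right _ _) hn), ← TensorProduct.sum_tmul,
            hx n (le_trans (le_max_left _ _) hn)]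
  | add u v hu hv =>
    obtain ⟨Nu, hu⟩ := hu
    obtain ⟨Nv, hv⟩ := hv
    refine ⟨max Nu Nv, fun n hn => ?_⟩
    simp only [map_add, Finset.sum_add_distrib]
    rw [hu n (le_trans (le_max_left _ _) hn), hv n (le_trans (le_max_right _ _) hn)]

lemma comul_decompose
    (hcomul : ∀ (i : ℕ) (b : B), b ∈ ℬ i → ∀ j k : ℕ, j + k ≠ i →
      TensorProduct.map (GradedAlgebra.proj ℬ j) (GradedAlgebra.proj ℬ k)
        (Coalgebra.comul (R := A) b) = 0)
    {i : ℕ} {b : B} (hb : b ∈ ℬ i) :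
    Coalgebra.comul (R := A) b
      = ∑ j ∈ Finset.range (i+1),
          TensorProduct.map (GradedAlgebra.proj ℬ j) (GradedAlgebra.proj ℬ (i-j))
            (Coalgebra.comul (R := A) b) := by
  obtain ⟨N, hN⟩ := sum_proj_tmul ℬ (Coalgebra.comul (R := A) b)
  set n := max N (i+1) with hn
  conv_lhs => rw [← hN n (le_max_left _ _)]
  rw [← Finset.sum_filter_of_ne (p := fun q : ℕ × ℕ => q.1 + q.2 = i)
    (fun q _ hq => by_contra fun hne => hq (hcomul i b hb q.1 q.2 hne))]
  refine Finset.sum_nbij' (fun q => q.1) (fun j => (j, i - j)) ?_ ?_ ?_ ?_ ?_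
  · intro q hq
    rw [Finset.mem_filter, Finset.mem_product] at hq
    obtain ⟨⟨h1, h2⟩, h3⟩ := hq
    simp only [Finset.mem_range] at h1 h2 ⊢
    omega
  · intro j hj
    simp only [Finset.mem_range] at hj
    have hni : i + 1 ≤ n := le_max_right _ _
    rw [Finset.mem_filter, Finset.mem_product]
    refine ⟨⟨?_, ?_⟩, ?_⟩ <;> simp only [Finset.mem_range] <;> omega
  · intro q hq
    rw [Finset.mem_filter, Finset.mem_product] at hq
    obtain ⟨⟨h1, h2⟩, h3⟩ := hq
    have : i - q.1 = q.2 := by omega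
    simp [this]
  · intro j _
    rfl
  · intro q hq
    rw [Finset.mem_filter, Finset.mem_product] at hq
    obtain ⟨⟨h1, h2⟩, h3⟩ := hq
    have : i - q.1 = q.2 := by omega
    simp [this]


section Rat

variable [Algebra ℚ A]

lemma counit_eq_zero
    (hcomul : ∀ (i : ℕ) (b : B), b ∈ ℬ i → ∀ j k : ℕ, j + k ≠ i →
      TensorProduct.map (GradedAlgebra.proj ℬ j) (GradedAlgebra.proj ℬ k)
        (Coalgebra.comul (R := A) b) = 0)
    (hGa : ∀ (i : ℕ) (b : B), b ∈ ℬ i → ∀ j k : ℕ, j + k = i →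
      LinearMap.mul' A B
        (TensorProduct.map (GradedAlgebra.proj ℬ j) (GradedAlgebra.proj ℬ k)
          (Coalgebra.comul (R := A) b)) = (i.choose j) • b)
    {i : ℕ} (hi : i ≠ 0) {b : B} (hb : b ∈ ℬ i) :
    Coalgebra.counit (R := A) b = 0 := by
  set E : B ⊗[A] B →ₗ[A] A :=
    (TensorProduct.lid A A).toLinearMap ∘ₗ
      TensorProduct.map (Coalgebra.counit (R := A)) (Coalgebra.counit (R := A)) with hE
  have hE_mul : ∀ t : B ⊗[A] B, E t = Coalgebra.counit (R := A) (LinearMap.mul' A B t) := by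
    intro t
    induction t using TensorProduct.induction_on with
    | zero => simp
    | tmul x y =>
      simp [hE, Bialgebra.counit_mul, LinearMap.mul'_apply, TensorProduct.lid_tmul,
        smul_eq_mul]
    | add u v hu hv => simp only [map_add, hu, hv]
  have h1 : E (Coalgebra.comul (R := A) b) = Coalgebra.counit (R := A) b := by
    have r := Coalgebra.Repr.arbitrary A b
    rw [← r.eq, map_sum]
    have : ∀ j ∈ r.index, E (r.left j ⊗ₜ[A] r.right j)
        = Coalgebra.counit (R := A) (Coalgebra.counit (R := A) (r.left j) • r.right j) := by
      intro j _
      simp [hE, TensorProduct.lid_tmul, smul_eq_mul]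
    rw [Finset.sum_congr rfl this, ← map_sum, sum_counit_smul]
  have h2 : Coalgebra.counit (R := A) b = (2^i) • Coalgebra.counit (R := A) b := by
    conv_lhs => rw [← h1, comul_decompose ℬ hcomul hb, map_sum]
    have : ∀ j ∈ Finset.range (i+1),
        E (TensorProduct.map (GradedAlgebra.proj ℬ j) (GradedAlgebra.proj ℬ (i-j))
          (Coalgebra.comul (R := A) b))
        = (i.choose j) • Coalgebra.counit (R := A) b := by
      intro j hj
      rw [hE_mul, hGa i b hb j (i-j) (by simp only [Finset.mem_range] at hj; omega), map_nsmul]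
    rw [Finset.sum_congr rfl this, ← Finset.sum_smul, Nat.sum_range_choose]
  have h3 : ((2:ℚ)^i - 1) • Coalgebra.counit (R := A) b = 0 := by
    have h2' : ((2^i : ℕ) : ℚ) • Coalgebra.counit (R := A) b
        = (2^i : ℕ) • Coalgebra.counit (R := A) b := Nat.cast_smul_eq_nsmul ℚ _ _
    rw [sub_smul, one_smul]
    push_cast at h2'
    rw [h2', ← h2, sub_self]
  have hne : ((2:ℚ)^i - 1) ≠ 0 := by
    have : (1:ℚ) < 2^i := by
      apply one_lt_pow₀ (by norm_num) hi
    linarith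
  have := congrArg (fun z => (((2:ℚ)^i - 1)⁻¹) • z) h3
  simpa [smul_smul, inv_mul_cancel₀ hne] using this

lemma T_vanish
    (hcomul : ∀ (i : ℕ) (b : B), b ∈ ℬ i → ∀ j k : ℕ, j + k ≠ i →
      TensorProduct.map (GradedAlgebra.proj ℬ j) (GradedAlgebra.proj ℬ k)
        (Coalgebra.comul (R := A) b) = 0)
    (hGa : ∀ (i : ℕ) (b : B), b ∈ ℬ i → ∀ j k : ℕ, j + k = i →
      LinearMap.mul' A B
        (TensorProduct.map (GradedAlgebra.proj ℬ j) (GradedAlgebra.proj ℬ k)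
          (Coalgebra.comul (R := A) b)) = (i.choose j) • b)
    (φ : B →ₗ[A] C) (hφ : ∀ j, j ≠ 1 → ∀ b ∈ ℬ j, φ b = 0) :
    ∀ n i, n ≠ i → ∀ b ∈ ℬ i, T φ n b = 0 := by
  intro n
  induction n with
  | zero =>
    intro i hni b hb
    rw [T_zero_apply, counit_eq_zero ℬ hcomul hGa (fun h => hni h.symm) hb, map_zero]
  | succ n ih =>
    intro i hni b hb
    rw [T_succ]
    simp only [LinearMap.coe_comp, Function.comp_apply]
    rw [comul_decompose ℬ hcomul hb, map_sum, map_sum]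
    refine Finset.sum_eq_zero fun j hj => ?_
    simp only [Finset.mem_range] at hj
    generalize Coalgebra.comul (R := A) b = t
    induction t using TensorProduct.induction_on with
    | zero => simp
    | tmul x y =>
      simp only [TensorProduct.map_tmul, LinearMap.mul'_apply]
      by_cases hj1 : j = 1
      · subst hj1
        have : n ≠ i - 1 := by omega
        rw [ih (i-1) this _ (proj_mem ℬ (i-1) y), mul_zero]
      · rw [hφ j hj1 _ (proj_mem ℬ j x), zero_mul]
    | add u v hu hv => simp only [map_add, hu, hv, add_zero]



lemma triple_sum_factor {ι κ : Type*} (s : Finset ι) (t : Finset κ) (N : ℕ) (w : ℕ → ℕ)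
    (a c : ι → ℕ → C) (b d : κ → ℕ → C) :
    ∑ i ∈ s, ∑ j ∈ t, ∑ k ∈ Finset.range N, w k • (a i k * b j k + c i k * d j k)
      = ∑ k ∈ Finset.range N, w k •
          ((∑ i ∈ s, a i k) * (∑ j ∈ t, b j k) + (∑ i ∈ s, c i k) * (∑ j ∈ t, d j k)) := by
  rw [Finset.sum_congr rfl (fun i (_ : i ∈ s) => Finset.sum_comm (s := t)
    (t := Finset.range N) (f := fun j k => w k • (a i k * b j k + c i k * d j k)))]
  rw [Finset.sum_comm (s := s) (t := Finset.range N)]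
  refine Finset.sum_congr rfl fun k _ => ?_
  simp only [smul_add, Finset.sum_add_distrib, Finset.smul_sum, Finset.sum_mul_sum]

lemma pascal_sum (v w : ℕ → C) (n : ℕ) :
    ∑ k ∈ Finset.range (n+1), (n.choose k) • (v (k+1) * w (n-k) + v k * w (n-k+1))
      = ∑ m ∈ Finset.range (n+2), ((n+1).choose m) • (v m * w (n+1-m)) := by
  have h1 : ∑ k ∈ Finset.range (n+1), (n.choose k) • (v k * w (n-k+1))
      = (∑ k ∈ Finset.range n, (n.choose (k+1)) • (v (k+1) * w (n-k))) + v 0 * w (n+1) := by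
    rw [Finset.sum_range_succ']
    simp only [Nat.choose_zero_right, one_smul, Nat.sub_zero]
    congr 1
    refine Finset.sum_congr rfl fun k hk => ?_
    have : n - (k+1) + 1 = n - k := by
      simp only [Finset.mem_range] at hk; omega
    rw [this]
  have h2 : ∑ m ∈ Finset.range (n+2), ((n+1).choose m) • (v m * w (n+1-m))
      = (∑ k ∈ Finset.range (n+1), ((n+1).choose (k+1)) • (v (k+1) * w (n-k))) + v 0 * w (n+1) := by
    rw [Finset.sum_range_succ']
    simp only [Nat.choose_zero_right, one_smul, Nat.sub_zero]
    congr 1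
    refine Finset.sum_congr rfl fun k _ => ?_
    rw [Nat.succ_sub_succ]
  rw [h2]
  simp only [Nat.choose_succ_succ', add_smul, Finset.sum_add_distrib]
  rw [Finset.sum_range_succ (f := fun k => (n.choose (k+1)) • (v (k+1) * w (n-k)))]
  simp only [Nat.choose_succ_self, zero_smul, add_zero]
  simp only [smul_add, Finset.sum_add_distrib]
  rw [h1]
  abel

lemma phi_mul
    (hconn : ℬ 0 = LinearMap.range (Algebra.linearMap A B))
    (hcomul : ∀ (i : ℕ) (b : B), b ∈ ℬ i → ∀ j k : ℕ, j + k ≠ i →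
      TensorProduct.map (GradedAlgebra.proj ℬ j) (GradedAlgebra.proj ℬ k)
        (Coalgebra.comul (R := A) b) = 0)
    (hGa : ∀ (i : ℕ) (b : B), b ∈ ℬ i → ∀ j k : ℕ, j + k = i →
      LinearMap.mul' A B
        (TensorProduct.map (GradedAlgebra.proj ℬ j) (GradedAlgebra.proj ℬ k)
          (Coalgebra.comul (R := A) b)) = (i.choose j) • b)
    (φ : B →ₗ[A] C) (hφ : ∀ j, j ≠ 1 → ∀ b ∈ ℬ j, φ b = 0) :
    ∀ x y : B, φ (x * y) = φ x * T φ 0 y + T φ 0 x * φ y := by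
  have hcz : ∀ {j : ℕ}, j ≠ 0 → ∀ {b : B}, b ∈ ℬ j → Coalgebra.counit (R := A) b = 0 := by
    intro j hj b hb; exact counit_eq_zero ℬ hcomul hGa hj hb
  have halg : ∀ c : A, ∀ y : B, φ (algebraMap A B c * y) = φ (algebraMap A B c) * T φ 0 y
      + T φ 0 (algebraMap A B c) * φ y := by
    intro c y
    have h0 : φ (algebraMap A B c) = 0 := by
      refine hφ 0 (by norm_num) _ ?_
      rw [hconn]; exact ⟨c, rfl⟩
    have hc : Coalgebra.counit (R := A) (algebraMap A B c) = c := by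
      have := (Bialgebra.counitAlgHom A B).commutes c
      simpa using this
    rw [h0, zero_mul, zero_add, T_zero_apply, hc, ← Algebra.smul_def, map_smul,
      Algebra.smul_def]
  have hleft : ∀ x ∈ ℬ 0, ∀ y : B, φ (x * y) = φ x * T φ 0 y + T φ 0 x * φ y := by
    intro x hx0 y
    rw [hconn] at hx0
    obtain ⟨c, hc⟩ := hx0
    subst hc
    simp only [Algebra.linearMap_apply]
    exact halg c y
  have hright : ∀ y ∈ ℬ 0, ∀ x : B, φ (x * y) = φ x * T φ 0 y + T φ 0 x * φ y := by
    intro y hy0 x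
    rw [hconn] at hy0
    obtain ⟨c, hc⟩ := hy0
    subst hc
    simp only [Algebra.linearMap_apply]
    rw [mul_comm _ (algebraMap A B c), halg c x]
    ring
  refine DirectSum.Decomposition.inductionOn ℬ ?_ ?_ ?_
  · intro y; simp
  · intro a m
    have hx : (m : B) ∈ ℬ a := SetLike.coe_mem m
    refine DirectSum.Decomposition.inductionOn ℬ ?_ ?_ ?_
    · simp
    · intro b m'
      have hy : (m' : B) ∈ ℬ b := SetLike.coe_mem m'
      by_cases ha : a = 0
      · exact hleft _ (ha ▸ hx) m'
      · by_cases hb : b = 0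
        · exact hright _ (hb ▸ hy) m
        · have hxy : (m : B) * m' ∈ ℬ (a + b) := SetLike.mul_mem_graded hx hy
          simp [hφ (a+b) (by omega) _ hxy, hcz ha hx, hcz hb hy]
    · intro y y' h1 h2
      rw [mul_add, map_add, h1, h2, map_add, map_add]
      ring
  · intro x x' h1 h2 y
    rw [add_mul, map_add, h1, h2, map_add, map_add]
    ring

lemma T_mul
    (hconn : ℬ 0 = LinearMap.range (Algebra.linearMap A B))
    (hcomul : ∀ (i : ℕ) (b : B), b ∈ ℬ i → ∀ j k : ℕ, j + k ≠ i →
      TensorProduct.map (GradedAlgebra.proj ℬ j) (GradedAlgebra.proj ℬ k)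
        (Coalgebra.comul (R := A) b) = 0)
    (hGa : ∀ (i : ℕ) (b : B), b ∈ ℬ i → ∀ j k : ℕ, j + k = i →
      LinearMap.mul' A B
        (TensorProduct.map (GradedAlgebra.proj ℬ j) (GradedAlgebra.proj ℬ k)
          (Coalgebra.comul (R := A) b)) = (i.choose j) • b)
    (φ : B →ₗ[A] C) (hφ : ∀ j, j ≠ 1 → ∀ b ∈ ℬ j, φ b = 0) :
    ∀ n (x y : B), T φ n (x * y)
      = ∑ k ∈ Finset.range (n+1), (n.choose k) • (T φ k x * T φ (n-k) y) := by
  intro n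
  induction n with
  | zero =>
    intro x y
    simp [Bialgebra.counit_mul, map_mul]
  | succ n ih =>
    intro x y
    have rx := Coalgebra.Repr.arbitrary A x
    have ry := Coalgebra.Repr.arbitrary A y
    -- Step 1 : expand T (n+1) (x*y) as a double sum
    have hprod : Coalgebra.comul (R := A) (x * y)
        = ∑ q ∈ rx.index ×ˢ ry.index,
            (rx.left q.1 * ry.left q.2) ⊗ₜ[A] (rx.right q.1 * ry.right q.2) := by
      rw [Bialgebra.comul_mul, ← rx.eq, ← ry.eq, Finset.sum_mul_sum]
      rw [Finset.sum_product]
      simp only [Algebra.TensorProduct.tmul_mul_tmul]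
    have key := T_succ_apply φ n (x * y)
      ⟨rx.index ×ˢ ry.index, fun q => rx.left q.1 * ry.left q.2,
        fun q => rx.right q.1 * ry.right q.2, hprod.symm⟩
    rw [key]
    dsimp only
    rw [Finset.sum_product]
    -- Step 2 : rewrite each term
    have step2 : ∀ i ∈ rx.index, ∀ j ∈ ry.index,
        φ (rx.left i * ry.left j) * T φ n (rx.right i * ry.right j)
        = ∑ k ∈ Finset.range (n+1), (n.choose k) •
            ((φ (rx.left i) * T φ k (rx.right i))
              * (T φ 0 (ry.left j) * T φ (n-k) (ry.right j))
            + (T φ 0 (rx.left i) * T φ k (rx.right i))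
              * (φ (ry.left j) * T φ (n-k) (ry.right j))) := by
      intro i _ j _
      rw [phi_mul ℬ hconn hcomul hGa φ hφ, ih]
      rw [Finset.mul_sum]
      refine Finset.sum_congr rfl fun k _ => ?_
      rw [mul_smul_comm]
      congr 1
      ring
    rw [Finset.sum_congr rfl (fun i hi => Finset.sum_congr rfl (fun j hj => step2 i hi j hj))]
    -- Step 3 : interchange sums and factor
    rw [triple_sum_factor rx.index ry.index (n+1) n.choose
      (fun i k => φ (rx.left i) * T φ k (rx.right i))
      (fun i k => T φ 0 (rx.left i) * T φ k (rx.right i))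
      (fun j k => T φ 0 (ry.left j) * T φ (n-k) (ry.right j))
      (fun j k => φ (ry.left j) * T φ (n-k) (ry.right j))]
    -- Step 4 : identify the four factors
    have f1 : ∀ k, ∑ i ∈ rx.index, φ (rx.left i) * T φ k (rx.right i) = T φ (k+1) x :=
      fun k => (T_succ_apply φ k x rx).symm
    have f2 : ∀ k, ∑ j ∈ ry.index, T φ 0 (ry.left j) * T φ (n-k) (ry.right j) = T φ (n-k) y := by
      intro k
      simp only [T_zero_apply]
      exact conv_unit_left (T φ (n-k)) y ry
    have f3 : ∀ k, ∑ i ∈ rx.index, T φ 0 (rx.left i) * T φ k (rx.right i) = T φ k x := by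
      intro k
      simp only [T_zero_apply]
      exact conv_unit_left (T φ k) x rx
    have f4 : ∀ k, ∑ j ∈ ry.index, φ (ry.left j) * T φ (n-k) (ry.right j) = T φ (n-k+1) y :=
      fun k => (T_succ_apply φ (n-k) y ry).symm
    rw [Finset.sum_congr rfl (fun k _ => by rw [f1 k, f2 k, f3 k, f4 k])]
    -- Step 5 : Pascal's identity
    exact pascal_sum (fun m => T φ m x) (fun m => T φ m y) n


lemma mem_adjoin
    (hconn : ℬ 0 = LinearMap.range (Algebra.linearMap A B))
    (hGa : ∀ (i : ℕ) (b : B), b ∈ ℬ i → ∀ j k : ℕ, j + k = i →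
      LinearMap.mul' A B
        (TensorProduct.map (GradedAlgebra.proj ℬ j) (GradedAlgebra.proj ℬ k)
          (Coalgebra.comul (R := A) b)) = (i.choose j) • b) :
    ∀ x : B, x ∈ Algebra.adjoin A (ℬ 1 : Set B) := by
  have key : ∀ i : ℕ, ∀ b ∈ ℬ i, b ∈ Algebra.adjoin A (ℬ 1 : Set B) := by
    intro i
    induction i using Nat.strong_induction_on with
    | _ i ih =>
      match i with
      | 0 =>
        intro b hb
        rw [hconn] at hb
        obtain ⟨c, hc⟩ := hb
        exact hc ▸ (Algebra.adjoin A (ℬ 1 : Set B)).algebraMap_mem c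
      | (n+1) =>
        intro b hb
        have h := hGa (n+1) b hb 1 n (Nat.add_comm 1 n)
        rw [Nat.choose_one_right] at h
        have hmem : LinearMap.mul' A B
            (TensorProduct.map (GradedAlgebra.proj ℬ 1) (GradedAlgebra.proj ℬ n)
              (Coalgebra.comul (R := A) b)) ∈ Algebra.adjoin A (ℬ 1 : Set B) := by
          generalize Coalgebra.comul (R := A) b = t
          induction t using TensorProduct.induction_on with
          | zero => rw [map_zero, map_zero]; exact zero_mem _
          | tmul x y =>
            simp only [TensorProduct.map_tmul, LinearMap.mul'_apply]
            exact mul_mem (Algebra.subset_adjoin (proj_mem ℬ 1 x))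
              (ih n (Nat.lt_succ_self n) _ (proj_mem ℬ n y))
          | add u v hu hv => rw [map_add, map_add]; exact add_mem hu hv
        rw [h] at hmem
        have hb' : b = (algebraMap ℚ A (((n:ℚ)+1)⁻¹)) • ((n+1 : ℕ) • b) := by
          have hcast : ((n+1 : ℕ) : ℚ) = (n:ℚ)+1 := by push_cast; ring
          rw [← Nat.cast_smul_eq_nsmul A (n+1) b, smul_smul, ← map_natCast (algebraMap ℚ A) (n+1),
            ← map_mul, hcast, inv_mul_cancel₀ (by positivity : (n:ℚ) + 1 ≠ 0), map_one, one_smul]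
        rw [hb']
        exact Subalgebra.smul_mem _ hmem _
  refine DirectSum.Decomposition.inductionOn ℬ (zero_mem _)
    (fun {i} m => key i _ (SetLike.coe_mem m)) (fun _ _ h1 h2 => add_mem h1 h2)

end Rat

end Graded

end GaModuleAux


/-- Let `A` be a `ℚ`-algebra and `X = Spec B` a `G_a`-module scheme over
`A`.  Such a structure makes `B` a connected nonnegatively graded commutative Hopf
algebra over `A` whose comultiplication respects the grading and satisfies the
`G_a`-module identity (the `(j,k)`-bidegree component of `comul b` multiplies out to
`binom(i,j) • b` for homogeneous `b` of degree `i = j + k`).  Then `X ≅ Spec (Sym_A M)`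
as `G_a`-modules, with `M = B₁` the degree-one part: we express this by saying that
restriction to `B₁` identifies `A`-algebra maps out of `B` with `A`-linear maps out of
`B₁`, i.e. `B` is the symmetric algebra on `B₁`. -/
theorem gaModule_is_symmetric_algebra
    {A : Type u} {B : Type v} [CommRing A] [Algebra ℚ A] [CommRing B] [HopfAlgebra A B]
    (ℬ : ℕ → Submodule A B) [GradedAlgebra ℬ]
    (hconn : ℬ 0 = LinearMap.range (Algebra.linearMap A B))
    (hinj : Function.Injective (algebraMap A B))
    (hcomul : ∀ (i : ℕ) (b : B), b ∈ ℬ i → ∀ j k : ℕ, j + k ≠ i →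
      TensorProduct.map (GradedAlgebra.proj ℬ j) (GradedAlgebra.proj ℬ k)
        (Coalgebra.comul (R := A) b) = 0)
    (hGa : ∀ (i : ℕ) (b : B), b ∈ ℬ i → ∀ j k : ℕ, j + k = i →
      LinearMap.mul' A B
        (TensorProduct.map (GradedAlgebra.proj ℬ j) (GradedAlgebra.proj ℬ k)
          (Coalgebra.comul (R := A) b)) = (i.choose j) • b) :
    ∀ (C : Type w) [CommRing C] [Algebra A C],
      Function.Bijective
        (fun f : B →ₐ[A] C => (f.toLinearMap ∘ₗ (ℬ 1).subtype : ℬ 1 →ₗ[A] C)) := by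
  classical
  intro C _ _
  constructor
  · -- injectivity
    intro f1 f2 hf
    have h1 : ∀ x ∈ (ℬ 1 : Set B), f1 x = f2 x := by
      intro x hx
      simpa using LinearMap.congr_fun hf (⟨x, hx⟩ : ℬ 1)
    apply AlgHom.ext
    intro b
    exact Algebra.adjoin_le (fun x hx => (AlgHom.mem_equalizer f1 f2 x).mpr (h1 x hx))
      (GaModuleAux.mem_adjoin ℬ hconn hGa b)
  · -- surjectivity
    intro g
    set c1 : B →ₗ[A] (ℬ 1) :=
      (DirectSum.component A ℕ (fun i => (ℬ i)) 1) ∘ₗ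
        (DirectSum.decomposeAlgEquiv ℬ).toLinearMap with hc1
    set φ : B →ₗ[A] C := g ∘ₗ c1 with hφdef
    have hφ_apply : ∀ b : B, φ b = g (DirectSum.decompose ℬ b 1) := fun b => rfl
    have hφ : ∀ j, j ≠ 1 → ∀ b ∈ ℬ j, φ b = 0 := by
      intro j hj b hb
      have h0 : (DirectSum.decompose ℬ b) 1 = 0 :=
        Submodule.coe_eq_zero.mp (DirectSum.decompose_of_mem_ne ℬ hb hj)
      rw [hφ_apply, h0, map_zero]
    have hφ1 : ∀ (b : B) (hb : b ∈ ℬ 1), φ b = g ⟨b, hb⟩ := by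
      intro b hb
      rw [hφ_apply, DirectSum.decompose_of_mem ℬ hb, DirectSum.of_eq_same]
    set e : ℕ → C := fun n => algebraMap A C (algebraMap ℚ A ((Nat.factorial n : ℚ)⁻¹)) with he
    set Fmod : B →ₗ[A] C :=
      (DirectSum.toModule A ℕ C
          (fun n => (LinearMap.mul A C (e n)) ∘ₗ (GaModuleAux.T φ n ∘ₗ (ℬ n).subtype))) ∘ₗ
        (DirectSum.decomposeAlgEquiv ℬ).toLinearMap with hFdef
    have hF : ∀ (i : ℕ) (b : B), b ∈ ℬ i → Fmod b = e i * GaModuleAux.T φ i b := by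
      intro i b hb
      have h0 : Fmod b = DirectSum.toModule A ℕ C
          (fun n => (LinearMap.mul A C (e n)) ∘ₗ (GaModuleAux.T φ n ∘ₗ (ℬ n).subtype))
          (DirectSum.decompose ℬ b) := rfl
      rw [h0, DirectSum.decompose_of_mem ℬ hb, ← DirectSum.lof_eq_of A, DirectSum.toModule_lof]
      rfl
    have he_mul : ∀ a b : ℕ, ((a+b).choose a) • e (a+b) = e a * e b := by
      intro a b
      have hc : (((a+b).choose a : ℚ)) * (Nat.factorial (a+b) : ℚ)⁻¹
          = ((Nat.factorial a : ℚ))⁻¹ * ((Nat.factorial b : ℚ))⁻¹ := by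
        have h1 : ((a+b).choose a * Nat.factorial a * Nat.factorial b : ℕ)
            = (Nat.factorial (a+b) : ℕ) := by
          rw [← Nat.choose_mul_factorial_mul_factorial (Nat.le_add_right a b)]
          congr 2
          omega
        have h2 : (((a+b).choose a : ℚ)) * (Nat.factorial a : ℚ) * (Nat.factorial b : ℚ)
            = (Nat.factorial (a+b) : ℚ) := by
          exact_mod_cast congrArg (Nat.cast : ℕ → ℚ) h1
        have ha : (Nat.factorial a : ℚ) ≠ 0 := Nat.cast_ne_zero.mpr (Nat.factorial_ne_zero a)
        have hbq : (Nat.factorial b : ℚ) ≠ 0 := Nat.cast_ne_zero.mpr (Nat.factorial_ne_zero b)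
        have hab : (Nat.factorial (a+b) : ℚ) ≠ 0 := Nat.cast_ne_zero.mpr (Nat.factorial_ne_zero _)
        field_simp
        linarith [h2]
      rw [he]
      simp only
      rw [nsmul_eq_mul, ← map_mul, ← map_natCast (algebraMap A C) ((a+b).choose a),
        ← map_natCast (algebraMap ℚ A) ((a+b).choose a), ← map_mul, ← map_mul, hc, map_mul]
    have hF_one : Fmod 1 = 1 := by
      rw [hF 0 1 (SetLike.one_mem_graded ℬ)]
      simp [he, GaModuleAux.T_zero_apply]
    have hF_mul : ∀ x y : B, Fmod (x * y) = Fmod x * Fmod y := by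
      refine DirectSum.Decomposition.inductionOn ℬ ?_ ?_ ?_
      · intro y; simp
      · intro a m
        refine DirectSum.Decomposition.inductionOn ℬ ?_ ?_ ?_
        · simp
        · intro b m'
          have hxy : (m : B) * (m' : B) ∈ ℬ (a + b) :=
            SetLike.mul_mem_graded (SetLike.coe_mem m) (SetLike.coe_mem m')
          rw [hF (a+b) _ hxy, hF a _ (SetLike.coe_mem m), hF b _ (SetLike.coe_mem m'),
            GaModuleAux.T_mul ℬ hconn hcomul hGa φ hφ (a+b) (m : B) (m' : B)]
          rw [Finset.sum_eq_single a]
          · rw [Nat.add_sub_cancel_left, mul_smul_comm, ← smul_mul_assoc, he_mul a b]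
            ring
          · intro k _ hk
            rw [GaModuleAux.T_vanish ℬ hcomul hGa φ hφ k a hk _ (SetLike.coe_mem m),
              zero_mul, smul_zero]
          · intro h
            exact absurd (Finset.mem_range.mpr (by omega)) h
        · intro y y' h1 h2
          rw [mul_add, map_add, h1, h2, map_add, mul_add]
      · intro x x' h1 h2 y
        rw [add_mul, map_add, h1, h2, map_add, add_mul]
    refine ⟨AlgHom.ofLinearMap Fmod hF_one hF_mul, ?_⟩
    apply LinearMap.ext
    intro m
    show Fmod (m : B) = g m
    rw [hF 1 _ (SetLike.coe_mem m), GaModuleAux.T_one_apply, hφ1 _ (SetLike.coe_mem m)]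
    have h1 : e 1 = 1 := by simp [he]
    rw [h1, one_mul]
end

section
/- Let A be a Q-algebra and let B be a connected nonnegatively graded commutative Hopf algebra over A arising from a G_a-module structure (so the comultiplication interacts with the A[t]-coaction as required). Then B is generated as an A-algebra by its degree-1 elements; equivalently, the natural graded Hopf algebra map Sym_A(B_1) → B is surjective. -/
open TensorProduct

/-- Let `A` be a `ℚ`-algebra and `B` a connected nonnegatively graded
commutative Hopf algebra over `A` arising from a `G_a`-module structure.  The `G_a`-module
condition is encoded by the identity `b·(t₁+t₂)^i = Σ t₁^j t₂^k (components of comul b)`,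
i.e. for homogeneous `b` of degree `i` and `j + k = i`, multiplying the `(j,k)`-bidegree
component of `comul b` yields `binom(i,j) • b`.  Then `B` is generated as an `A`-algebra
by its degree-one elements. -/
theorem gaModule_generated_in_degree_one
    {A B : Type*} [CommRing A] [Algebra ℚ A] [CommRing B] [HopfAlgebra A B]
    (ℬ : ℕ → Submodule A B) [GradedAlgebra ℬ]
    (hconn : ℬ 0 = LinearMap.range (Algebra.linearMap A B))
    (hinj : Function.Injective (algebraMap A B))
    (hcomul : ∀ (i : ℕ) (b : B), b ∈ ℬ i → ∀ j k : ℕ, j + k ≠ i →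
      TensorProduct.map (GradedAlgebra.proj ℬ j) (GradedAlgebra.proj ℬ k)
        (Coalgebra.comul (R := A) b) = 0)
    (hGa : ∀ (i : ℕ) (b : B), b ∈ ℬ i → ∀ j k : ℕ, j + k = i →
      LinearMap.mul' A B
        (TensorProduct.map (GradedAlgebra.proj ℬ j) (GradedAlgebra.proj ℬ k)
          (Coalgebra.comul (R := A) b)) = (i.choose j) • b) :
    Algebra.adjoin A (ℬ 1 : Set B) = ⊤ := by
  classical
  set S := Algebra.adjoin A (ℬ 1 : Set B) with hSdef
  have hproj : ∀ (j : ℕ) (x : B), GradedAlgebra.proj ℬ j x ∈ ℬ j := by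
    intro j x
    rw [GradedAlgebra.proj_apply]
    exact SetLike.coe_mem _
  have key : ∀ i : ℕ, ∀ b ∈ ℬ i, b ∈ S := by
    intro i
    induction i using Nat.strong_induction_on with
    | _ i ih =>
      intro b hb
      rcases i with (_ | _ | n)
      · rw [hconn] at hb
        obtain ⟨a, rfl⟩ := hb
        exact S.algebraMap_mem a
      · exact Algebra.subset_adjoin hb
      · have h1 := hGa (n + 2) b hb 1 (n + 1) (by omega)
        rw [Nat.choose_one_right] at h1
        have hmem : LinearMap.mul' A B
            (TensorProduct.map (GradedAlgebra.proj ℬ 1) (GradedAlgebra.proj ℬ (n + 1))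
              (Coalgebra.comul (R := A) b)) ∈ S := by
          induction Coalgebra.comul (R := A) b using TensorProduct.induction_on with
          | zero => simpa using S.zero_mem
          | tmul x y =>
            simp only [TensorProduct.map_tmul, LinearMap.mul'_apply]
            exact mul_mem (Algebra.subset_adjoin (hproj 1 x))
              (ih (n + 1) (by omega) _ (hproj (n + 1) y))
          | add x y hx hy =>
            simp only [map_add]
            exact add_mem hx hy
        rw [h1] at hmem
        set a : A := algebraMap ℚ A ((n + 2 : ℚ))⁻¹ with ha
        have hone : (n + 2 : ℕ) • a = 1 := by
          rw [ha, ← map_nsmul, nsmul_eq_mul]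
          have hc : ((n + 2 : ℕ) : ℚ) * ((n : ℚ) + 2)⁻¹ = 1 := by
            have h2 : ((n + 2 : ℕ) : ℚ) = (n : ℚ) + 2 := by push_cast; ring
            rw [h2, mul_inv_cancel₀ (by positivity)]
          rw [hc, map_one]
        have hb2 : b = a • ((n + 2 : ℕ) • b) := by
          rw [smul_comm, ← smul_assoc, hone, one_smul]
        rw [hb2]
        exact S.smul_mem hmem a
  rw [eq_top_iff]
  intro b _
  rw [← DirectSum.sum_support_decompose ℬ b]
  exact Subalgebra.sum_mem _ fun i _ => key i _ (SetLike.coe_mem _)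
end
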